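/- Let m ≥ 1, r ≥ 1, r' ∈ ℤ_{≥0}, α_0, a ∈ ℂ, λ_0, λ_1,…,λ_m, α_1,…,α_m ∈ ℂ* with λ_0,…,λ_m pairwise distinct, and let γ(t) = ∑_l c_l t^l ∈ ℂ[t,t^{−1}] be a Laurent polynomial. Let V be an infinite-dimensional irreducible L̄_r-module on which B_r is injective, and let V' be an irreducible L̄_{r'}-module. Then the Virasoro modules M(V,Ω(λ_0,α_0)) ⊗ ⊗_{i=1}^m Ω(λ_i,α_i) and M(V',γ(t)) are not isomorphic: there is no linear bijection between them commuting with the respective operators L_k for all k ∈ ℤ. -/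

import Mathlib

open TensorProduct

/-- Substitution `X_i ↦ X_i - k` (in the variable `i` only) on `ℂ[X_0,…,X_{N-1}]`. -/
noncomputable def shiftVar {N : ℕ} (i : Fin N) (k : ℂ) :
    MvPolynomial (Fin N) ℂ →ₗ[ℂ] MvPolynomial (Fin N) ℂ :=
  (MvPolynomial.aeval fun j =>
    MvPolynomial.X j - if j = i then MvPolynomial.C k else 0).toLinearMap

/-- The operator `L_k` on `⊗_i Ω(λ_i,α_i) = ℂ[X_0,…,X_{N-1}]`. -/
noncomputable def omegaOp {N : ℕ} (lam al : Fin N → ℂ) (k : ℤ) :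
    MvPolynomial (Fin N) ℂ →ₗ[ℂ] MvPolynomial (Fin N) ℂ :=
  ∑ i : Fin N, (lam i ^ k) •
    ((LinearMap.mulLeft ℂ (MvPolynomial.X i - MvPolynomial.C ((k : ℂ) * al i))).comp
      (shiftVar i (k : ℂ)))

/-- The operator `L_k` on `M(V,Ω(λ_0,α_0)) ⊗ ⊗_{i=1}^m Ω(λ_i,α_i) = V ⊗ ℂ[X_0,…,X_m]`. -/
noncomputable def MOp {V : Type*} [AddCommGroup V] [Module ℂ V]
    (B : ℕ → V →ₗ[ℂ] V) (r : ℕ) {m : ℕ} (lam al : Fin (m + 1) → ℂ) (k : ℤ) :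
    V ⊗[ℂ] MvPolynomial (Fin (m + 1)) ℂ →ₗ[ℂ] V ⊗[ℂ] MvPolynomial (Fin (m + 1)) ℂ :=
  TensorProduct.map LinearMap.id (omegaOp lam al k) +
  ∑ j ∈ Finset.range (r + 1),
    (((k : ℂ) ^ (j + 1)) / ((j + 1).factorial : ℂ)) •
      TensorProduct.map (B j) ((lam 0 ^ k) • shiftVar 0 (k : ℂ))

/-- The operator `L_k` on the Virasoro module `M(V',γ(t)) = V' ⊗ ℂ[t,t^{−1}]`
(where `ℂ[t,t^{−1}]` is realised as `ℤ →₀ ℂ`, with `t^n` the finitely supported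
function `single n 1`):
`L_k(v ⊗ t^n) = (a + n) v ⊗ t^{k+n} + ∑_{e=0}^{r'} (k^{e+1}/(e+1)!) B'_e v ⊗ t^{k+n}
  + ∑_l c_l v ⊗ t^{n+l}`. -/
noncomputable def laurOp {V' : Type*} [AddCommGroup V'] [Module ℂ V']
    (B' : ℕ → V' →ₗ[ℂ] V') (r' : ℕ) (a : ℂ) (c : ℤ →₀ ℂ) (k : ℤ) :
    V' ⊗[ℂ] (ℤ →₀ ℂ) →ₗ[ℂ] V' ⊗[ℂ] (ℤ →₀ ℂ) :=
  TensorProduct.map LinearMap.id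
      (Finsupp.lsum ℂ fun n : ℤ => (a + (n : ℂ)) • Finsupp.lsingle (k + n)) +
  (∑ e ∈ Finset.range (r' + 1),
    (((k : ℂ) ^ (e + 1)) / ((e + 1).factorial : ℂ)) •
      TensorProduct.map (B' e) (Finsupp.lsum ℂ fun n : ℤ => Finsupp.lsingle (k + n))) +
  TensorProduct.map LinearMap.id
      (Finsupp.lsum ℂ fun n : ℤ => c.sum fun l cl => cl • Finsupp.lsingle (n + l))

open MvPolynomial in
private lemma deg_aeval_le {N : ℕ} (g : Fin N → MvPolynomial (Fin N) ℂ)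
    (hg : ∀ j, (g j).totalDegree ≤ 1) (f : MvPolynomial (Fin N) ℂ) :
    ((aeval g) f).totalDegree ≤ f.totalDegree := by
  conv_lhs => rw [f.as_sum]
  rw [map_sum]
  refine (totalDegree_finset_sum _ _).trans (Finset.sup_le fun s hs => ?_)
  rw [aeval_monomial]
  calc ((algebraMap ℂ (MvPolynomial (Fin N) ℂ) (coeff s f)) *
        s.prod fun j e => g j ^ e).totalDegree
      ≤ (algebraMap ℂ (MvPolynomial (Fin N) ℂ) (coeff s f)).totalDegree
        + (s.prod fun j e => g j ^ e).totalDegree := totalDegree_mul _ _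
    _ ≤ 0 + (s.prod fun j e => g j ^ e).totalDegree := by
        rw [algebraMap_eq, totalDegree_C]
    _ ≤ ∑ j ∈ s.support, (g j ^ s j).totalDegree := by
        rw [zero_add, Finsupp.prod]
        exact totalDegree_finset_prod _ _
    _ ≤ ∑ j ∈ s.support, s j := by
        refine Finset.sum_le_sum fun j _ => (totalDegree_pow _ _).trans ?_
        calc s j * (g j).totalDegree ≤ s j * 1 := Nat.mul_le_mul_left _ (hg j)
          _ = s j := Nat.mul_one _
    _ ≤ f.totalDegree := by
        have := le_totalDegree (p := f) hs
        rwa [Finsupp.sum] at this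

private lemma deg_shiftVar {N : ℕ} (i : Fin N) (k : ℂ) (f : MvPolynomial (Fin N) ℂ) :
    (shiftVar i k f).totalDegree ≤ f.totalDegree := by
  refine deg_aeval_le _ (fun j => ?_) f
  by_cases h : j = i
  · simp only [h, if_pos rfl]
    refine (MvPolynomial.totalDegree_sub _ _).trans ?_
    simp [MvPolynomial.totalDegree_X, MvPolynomial.totalDegree_C]
  · simp [h, MvPolynomial.totalDegree_X]

private lemma deg_omegaOp {N : ℕ} (lam al : Fin N → ℂ) (k : ℤ) (f : MvPolynomial (Fin N) ℂ) :
    (omegaOp lam al k f).totalDegree ≤ f.totalDegree + 1 := by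
  rw [omegaOp, LinearMap.sum_apply]
  refine (MvPolynomial.totalDegree_finset_sum _ _).trans (Finset.sup_le fun i _ => ?_)
  rw [LinearMap.smul_apply, LinearMap.comp_apply, LinearMap.mulLeft_apply]
  refine (MvPolynomial.totalDegree_smul_le _ _).trans ?_
  refine (MvPolynomial.totalDegree_mul _ _).trans ?_
  have h1 : (MvPolynomial.X i - MvPolynomial.C ((k : ℂ) * al i)).totalDegree ≤ 1 :=
    (MvPolynomial.totalDegree_sub_C_le _ _).trans_eq (MvPolynomial.totalDegree_X _)
  have h2 := deg_shiftVar i (k : ℂ) f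
  omega

private lemma tmul_mem_range {V R : Type*} [AddCommGroup V] [Module ℂ V]
    [AddCommGroup R] [Module ℂ R]
    {U : Submodule ℂ V} {P : Submodule ℂ R} {v : V} {f : R} (hv : v ∈ U) (hf : f ∈ P) :
    v ⊗ₜ[ℂ] f ∈ LinearMap.range (TensorProduct.map U.subtype P.subtype) :=
  ⟨⟨v, hv⟩ ⊗ₜ ⟨f, hf⟩, by simp⟩

private lemma partA {V : Type*} [AddCommGroup V] [Module ℂ V]
    (B : ℕ → V →ₗ[ℂ] V) (r m : ℕ) (lam al : Fin (m + 1) → ℂ)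
    (x : V ⊗[ℂ] MvPolynomial (Fin (m + 1)) ℂ) :
    ∃ W : Submodule ℂ (V ⊗[ℂ] MvPolynomial (Fin (m + 1)) ℂ),
      Module.Finite ℂ W ∧ ∀ k : ℤ, MOp B r lam al k x ∈ W := by
  induction x using TensorProduct.induction_on with
  | zero => exact ⟨⊥, inferInstance, fun k => by simp⟩
  | tmul v f =>
    set U : Submodule ℂ V :=
      Submodule.span ℂ (insert v (Set.range fun j : Fin (r + 1) => B j v)) with hU
    set P := MvPolynomial.restrictTotalDegree (Fin (m + 1)) ℂ (f.totalDegree + 1) with hP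
    haveI hUfin : Module.Finite ℂ U :=
      Module.Finite.span_of_finite ℂ ((Set.finite_range _).insert v)
    refine ⟨LinearMap.range (TensorProduct.map U.subtype P.subtype),
      Module.Finite.range _, fun k => ?_⟩
    have hMem : ∀ g : MvPolynomial (Fin (m + 1)) ℂ, g.totalDegree ≤ f.totalDegree + 1 →
        g ∈ P := fun g hg => (MvPolynomial.mem_restrictTotalDegree _ _ _).mpr hg
    rw [MOp, LinearMap.add_apply, LinearMap.sum_apply]
    refine Submodule.add_mem _ ?_ (Submodule.sum_mem _ fun j hj => ?_)
    · rw [TensorProduct.map_tmul]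
      exact tmul_mem_range (Submodule.subset_span (Set.mem_insert _ _))
        (hMem _ (deg_omegaOp lam al k f))
    · rw [LinearMap.smul_apply, TensorProduct.map_tmul, LinearMap.smul_apply]
      refine Submodule.smul_mem _ _ ?_
      rw [tmul_smul]
      refine Submodule.smul_mem _ _ (tmul_mem_range ?_ ?_)
      · exact Submodule.subset_span
          (Set.mem_insert_iff.mpr (Or.inr ⟨⟨j, Finset.mem_range.mp hj⟩, rfl⟩))
      · exact hMem _ ((deg_shiftVar _ _ _).trans (Nat.le_succ _))
  | add x y hx hy =>
    obtain ⟨W1, h1, m1⟩ := hx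
    obtain ⟨W2, h2, m2⟩ := hy
    haveI := h1; haveI := h2
    exact ⟨W1 ⊔ W2, inferInstance, fun k => by
      rw [map_add]
      exact Submodule.add_mem _ (Submodule.mem_sup_left (m1 k))
        (Submodule.mem_sup_right (m2 k))⟩

private lemma laurOp_apply {V' : Type*} [AddCommGroup V'] [Module ℂ V']
    (B' : ℕ → V' →ₗ[ℂ] V') (r' : ℕ) (a : ℂ) (c : ℤ →₀ ℂ) (k n : ℤ) (v' : V') :
    laurOp B' r' a c k (v' ⊗ₜ[ℂ] Finsupp.single n 1) =
      ((a + (n : ℂ)) • v' + ∑ e ∈ Finset.range (r' + 1),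
          (((k : ℂ) ^ (e + 1)) / ((e + 1).factorial : ℂ)) • B' e v')
        ⊗ₜ[ℂ] Finsupp.single (k + n) (1 : ℂ)
      + v' ⊗ₜ[ℂ] ((Finsupp.lsum ℂ (fun n : ℤ => c.sum fun l cl => cl • Finsupp.lsingle (n + l)) :
            (ℤ →₀ ℂ) →ₗ[ℂ] (ℤ →₀ ℂ)) (Finsupp.single n (1 : ℂ))) := by
  rw [laurOp, LinearMap.add_apply, LinearMap.add_apply, LinearMap.sum_apply]
  rw [TensorProduct.map_tmul, TensorProduct.map_tmul, Finsupp.lsum_single]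
  rw [TensorProduct.add_tmul, TensorProduct.sum_tmul]
  congr 1
  · congr 1
    · rw [LinearMap.smul_apply, Finsupp.lsingle_apply, tmul_smul, smul_tmul']
      simp
    · refine Finset.sum_congr rfl fun e _ => ?_
      rw [LinearMap.smul_apply, TensorProduct.map_tmul, Finsupp.lsum_single,
        Finsupp.lsingle_apply, smul_tmul']

private lemma support_bound {V' : Type*} [AddCommGroup V'] [Module ℂ V']
    (W : Submodule ℂ (ℤ →₀ V')) (hW : W.FG) :
    ∃ T : Finset ℤ, ∀ x ∈ W, (x : ℤ →₀ V').support ⊆ T := by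
  obtain ⟨S, hS⟩ := hW
  refine ⟨S.sup Finsupp.support, fun x hx => ?_⟩
  rw [← hS] at hx
  induction hx using Submodule.span_induction with
  | mem g hg => exact Finset.le_sup (f := Finsupp.support) hg
  | zero => simp
  | add u v hu hv ihu ihv =>
    exact Finsupp.support_add.trans (Finset.union_subset ihu ihv)
  | smul t u hu ihu => exact Finsupp.support_smul.trans ihu

/-- **Proposition 5.3 (first part).** Let `m ≥ 1`, `r ≥ 1`, `r' ∈ ℤ_{≥0}`,
`α_0, a ∈ ℂ`, `λ_0,…,λ_m, α_1,…,α_m ∈ ℂ*` with `λ_0,…,λ_m` pairwise distinct, and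
`γ(t) ∈ ℂ[t,t^{−1}]`. Let `V` be an infinite-dimensional irreducible `L̄_r`-module
on which `B_r` is injective, and `V'` an irreducible `L̄_{r'}`-module. Then
`M(V,Ω(λ_0,α_0)) ⊗ ⊗_{i=1}^m Ω(λ_i,α_i) ≇ M(V',γ(t))`. -/
theorem statement14 {V V' : Type*} [AddCommGroup V] [Module ℂ V]
    [AddCommGroup V'] [Module ℂ V']
    (m r r' : ℕ) (hm : 1 ≤ m) (hr : 1 ≤ r)
    (lam al : Fin (m + 1) → ℂ)
    (hlam : ∀ i, lam i ≠ 0) (hlaminj : Function.Injective lam)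
    (hal : ∀ i, i ≠ 0 → al i ≠ 0)
    (a : ℂ) (c : ℤ →₀ ℂ)
    (B : ℕ → V →ₗ[ℂ] V)
    (hBtop : ∀ i, r < i → B i = 0)
    (hBrel : ∀ i j, i ≤ r → j ≤ r →
      B i ∘ₗ B j - B j ∘ₗ B i = (((j : ℂ) - (i : ℂ)) • B (i + j) : V →ₗ[ℂ] V))
    (hVne : ∃ v : V, v ≠ 0)
    (hVirr : ∀ U : Submodule ℂ V, (∀ i, i ≤ r → ∀ w ∈ U, B i w ∈ U) → U = ⊥ ∨ U = ⊤)
    (hVinf : ¬ Module.Finite ℂ V)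
    (hBrinj : Function.Injective (B r))
    (B' : ℕ → V' →ₗ[ℂ] V')
    (hB'top : ∀ i, r' < i → B' i = 0)
    (hB'rel : ∀ i j, i ≤ r' → j ≤ r' →
      B' i ∘ₗ B' j - B' j ∘ₗ B' i = (((j : ℂ) - (i : ℂ)) • B' (i + j) : V' →ₗ[ℂ] V'))
    (hV'ne : ∃ v : V', v ≠ 0)
    (hV'irr : ∀ U : Submodule ℂ V',
      (∀ i, i ≤ r' → ∀ w ∈ U, B' i w ∈ U) → U = ⊥ ∨ U = ⊤) :
    ¬ ∃ φ : (V ⊗[ℂ] MvPolynomial (Fin (m + 1)) ℂ) ≃ₗ[ℂ] (V' ⊗[ℂ] (ℤ →₀ ℂ)),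
        ∀ (k : ℤ) (x : V ⊗[ℂ] MvPolynomial (Fin (m + 1)) ℂ),
          φ (MOp B r lam al k x) = laurOp B' r' a c k (φ x) := by
  rintro ⟨φ, hφ⟩
  obtain ⟨v', hv'⟩ := hV'ne
  obtain ⟨n, hn⟩ : ∃ n : ℤ, a + (n : ℂ) ≠ 0 := by
    rcases eq_or_ne a 0 with h | h
    · exact ⟨1, by simp [h]⟩
    · exact ⟨0, by simpa using h⟩
  set y : V' ⊗[ℂ] (ℤ →₀ ℂ) := v' ⊗ₜ[ℂ] Finsupp.single n 1 with hy
  obtain ⟨W, hWfin, hWmem⟩ := partA B r m lam al (φ.symm y)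
  set g0 : ℤ →₀ ℂ :=
    (Finsupp.lsum ℂ (fun n : ℤ => c.sum fun l cl => cl • Finsupp.lsingle (n + l)) :
      (ℤ →₀ ℂ) →ₗ[ℂ] (ℤ →₀ ℂ)) (Finsupp.single n (1 : ℂ)) with hg0
  set W2 : Submodule ℂ (V' ⊗[ℂ] (ℤ →₀ ℂ)) :=
    W.map (φ : V ⊗[ℂ] MvPolynomial (Fin (m + 1)) ℂ →ₗ[ℂ] V' ⊗[ℂ] (ℤ →₀ ℂ)) ⊔
      Submodule.span ℂ {v' ⊗ₜ[ℂ] g0} with hW2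
  set W3 : Submodule ℂ (ℤ →₀ V') :=
    W2.map (TensorProduct.finsuppScalarRight ℂ ℂ V' ℤ).toLinearMap with hW3
  have hfg : W3.FG := by
    rw [hW3, hW2]
    exact Submodule.FG.map _ (Submodule.FG.sup
      (Submodule.FG.map _ (Module.Finite.iff_fg.mp hWfin))
      (Submodule.fg_span (Set.finite_singleton _)))
  obtain ⟨T, hT⟩ := support_bound W3 hfg
  obtain ⟨ψ, hψ⟩ : ∃ ψ : Module.Dual ℂ V', ψ v' ≠ 0 := by
    by_contra h
    push_neg at h
    exact hv' ((Module.forall_dual_apply_eq_zero_iff ℂ v').mp h)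
  set q : Polynomial ℂ := Polynomial.C ((a + (n : ℂ)) * ψ v') +
      ∑ e ∈ Finset.range (r' + 1),
        Polynomial.C (ψ (B' e v') / ((e + 1).factorial : ℂ)) * Polynomial.X ^ (e + 1) with hq
  have hq0 : q ≠ 0 := by
    intro h
    have hc := congrArg (fun p => Polynomial.coeff p 0) h
    simp [hq, Polynomial.coeff_X_pow, Polynomial.coeff_C] at hc
    exact hψ (hc.resolve_left hn)
  have hfin : ({k : ℤ | Polynomial.eval (k : ℂ) q = 0} ∪ {k : ℤ | k + n ∈ T}).Finite := by
    apply Set.Finite.union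
    · have : {k : ℤ | Polynomial.eval (k : ℂ) q = 0} =
          (fun k : ℤ => (k : ℂ)) ⁻¹' {x | q.IsRoot x} := rfl
      rw [this]
      exact Set.Finite.preimage Int.cast_injective.injOn (Polynomial.finite_setOf_isRoot hq0)
    · have : {k : ℤ | k + n ∈ T} = (fun k : ℤ => k + n) ⁻¹' (T : Set ℤ) := rfl
      rw [this]
      exact Set.Finite.preimage (add_left_injective n).injOn T.finite_toSet
  obtain ⟨k, hk⟩ := hfin.infinite_compl.nonempty
  rw [Set.mem_compl_iff, Set.mem_union, not_or] at hk
  obtain ⟨hk1, hk2⟩ := hk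
  rw [Set.mem_setOf_eq] at hk1 hk2
  set w : V' := (a + (n : ℂ)) • v' + ∑ e ∈ Finset.range (r' + 1),
      (((k : ℂ) ^ (e + 1)) / ((e + 1).factorial : ℂ)) • B' e v' with hw
  have hψw : ψ w = Polynomial.eval (k : ℂ) q := by
    rw [hw, hq, map_add, map_smul, map_sum, Polynomial.eval_add, Polynomial.eval_C,
      Polynomial.eval_finset_sum]
    congr 1
    refine Finset.sum_congr rfl fun e _ => ?_
    simp only [map_smul, smul_eq_mul, Polynomial.eval_mul, Polynomial.eval_C,
      Polynomial.eval_pow, Polynomial.eval_X]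
    ring
  have hw0 : w ≠ 0 := fun h => hk1 (by rw [← hψw, h, map_zero])
  have hmem2 : w ⊗ₜ[ℂ] Finsupp.single (k + n) (1 : ℂ) ∈ W2 := by
    have h1 : laurOp B' r' a c k y =
        w ⊗ₜ[ℂ] Finsupp.single (k + n) (1 : ℂ) + v' ⊗ₜ[ℂ] g0 :=
      laurOp_apply B' r' a c k n v'
    have h2 : laurOp B' r' a c k y ∈
        W.map (φ : V ⊗[ℂ] MvPolynomial (Fin (m + 1)) ℂ →ₗ[ℂ] V' ⊗[ℂ] (ℤ →₀ ℂ)) := by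
      have h := hφ k (φ.symm y)
      rw [LinearEquiv.apply_symm_apply] at h
      rw [← h]
      exact Submodule.mem_map_of_mem (hWmem k)
    have h2' : laurOp B' r' a c k y ∈ W2 := by
      rw [hW2]; exact Submodule.mem_sup_left h2
    have h3 : v' ⊗ₜ[ℂ] g0 ∈ W2 := by
      rw [hW2]; exact Submodule.mem_sup_right (Submodule.mem_span_singleton_self _)
    have h2'' : (w ⊗ₜ[ℂ] Finsupp.single (k + n) (1 : ℂ) + v' ⊗ₜ[ℂ] g0) ∈ W2 := by
      rw [← h1]; exact h2'
    have h5 : w ⊗ₜ[ℂ] Finsupp.single (k + n) (1 : ℂ) =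
        (w ⊗ₜ[ℂ] Finsupp.single (k + n) (1 : ℂ) + v' ⊗ₜ[ℂ] g0) + (-1 : ℂ) • (v' ⊗ₜ[ℂ] g0) := by
      module
    rw [h5]
    exact W2.add_mem h2'' (W2.smul_mem _ h3)
  have hmem3 : Finsupp.single (k + n) w ∈ W3 := by
    have himg : (TensorProduct.finsuppScalarRight ℂ ℂ V' ℤ)
        (w ⊗ₜ[ℂ] Finsupp.single (k + n) (1 : ℂ)) = Finsupp.single (k + n) w := by
      rw [TensorProduct.finsuppScalarRight_apply_tmul, Finsupp.sum_single_index] <;> simp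
    rw [hW3]
    exact himg ▸ Submodule.mem_map_of_mem hmem2
  exact hk2 (hT _ hmem3 (Finsupp.mem_support_iff.mpr (by simp [hw0])))
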